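/- Spread lemma: There is a universal constant C such that for all k ≥ 2 and R > 1, if 𝒜 is a collection of subsets of X each of size at most k, and there exists an R-spread probability measure π supported on 𝒜, then for all p ≥ C(log k)/R (with p ≤ 1), a p-biased random subset V of X contains some element of 𝒜 with probability at least 0.9. -/

import Mathlib

open Finset

/-- The p-biased product measure on subsets of a finite set `X`. -/
def Qbias {X : Type*} [Fintype X] [DecidableEq X] (p : ℝ) (V : Finset X) : ℝ :=
  p ^ V.card * (1 - p) ^ (Fintype.card X - V.card)

section Basic

variable {X : Type*} [Fintype X] [DecidableEq X]

lemma sum_powerset_binom (s : Finset X) (p r : ℝ) :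
    ∑ V ∈ s.powerset, p ^ V.card * r ^ (s.card - V.card) = (p + r) ^ s.card := by
  classical
  induction s using Finset.induction_on with
  | empty => simp
  | insert _ _ ha ih =>
    rename_i a s
    rw [Finset.sum_powerset_insert ha]
    have hca : (insert a s).card = s.card + 1 := Finset.card_insert_of_notMem ha
    have h1 : ∑ t ∈ s.powerset, p ^ t.card * r ^ ((insert a s).card - t.card)
        = r * ((p + r) ^ s.card) := by
      rw [← ih, Finset.mul_sum]
      apply Finset.sum_congr rfl
      intro t ht
      have htc : t.card ≤ s.card := Finset.card_le_card (Finset.mem_powerset.1 ht)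
      rw [hca, Nat.succ_sub htc, pow_succ]
      ring
    have h2 : ∑ t ∈ s.powerset, p ^ (insert a t).card * r ^ ((insert a s).card - (insert a t).card)
        = p * ((p + r) ^ s.card) := by
      rw [← ih, Finset.mul_sum]
      apply Finset.sum_congr rfl
      intro t ht
      have hts := Finset.mem_powerset.1 ht
      have hat : a ∉ t := fun h => ha (hts h)
      have htc : t.card ≤ s.card := Finset.card_le_card hts
      rw [Finset.card_insert_of_notMem hat, hca, Nat.succ_sub_succ, pow_succ]
      ring
    rw [h1, h2, hca, pow_succ]
    ring

lemma Qbias_sum (p : ℝ) : ∑ V : Finset X, Qbias p V = 1 := by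
  classical
  have : ∑ V : Finset X, Qbias p V
      = ∑ V ∈ (Finset.univ : Finset X).powerset, p ^ V.card * (1 - p) ^ ((Finset.univ : Finset X).card - V.card) := by
    rw [Finset.powerset_univ]
    rfl
  rw [this, sum_powerset_binom]
  simp

lemma Qbias_nonneg {p : ℝ} (h0 : 0 ≤ p) (h1 : p ≤ 1) (V : Finset X) : 0 ≤ Qbias p V := by
  have : 0 ≤ 1 - p := by linarith
  exact mul_nonneg (pow_nonneg h0 _) (pow_nonneg this _)

end Basic

section Conv

variable {X : Type*} [Fintype X] [DecidableEq X]

lemma conv_kernel (a b : ℝ) (V : Finset X) :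
    ∑ x ∈ (Finset.univ ×ˢ Finset.univ : Finset (Finset X × Finset X)).filter
        (fun x => x.1 ∪ x.2 = V),
      Qbias a x.1 * Qbias b x.2 = Qbias (a + b - a * b) V := by
  classical
  set n := Fintype.card X with hn
  have hVn : V.card ≤ n := Finset.card_le_univ V
  -- reindex by (W, K) with K ⊆ W ⊆ V, W' = (V \ W) ∪ K
  have hre : ∑ x ∈ (Finset.univ ×ˢ Finset.univ : Finset (Finset X × Finset X)).filter
        (fun x => x.1 ∪ x.2 = V), Qbias a x.1 * Qbias b x.2
      = ∑ y ∈ V.powerset.sigma (fun W => W.powerset),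
          Qbias a y.1 * Qbias b ((V \ y.1) ∪ y.2) := by
    refine (Finset.sum_nbij' (fun y : (_ : Finset X) × Finset X => (y.1, (V \ y.1) ∪ y.2))
      (fun x : Finset X × Finset X => ⟨x.1, x.2 ∩ x.1⟩) ?_ ?_ ?_ ?_ ?_).symm
    · rintro ⟨W, K⟩ hy
      simp only [Finset.mem_sigma, Finset.mem_powerset] at hy
      obtain ⟨hWV, hKW⟩ := hy
      simp only [Finset.mem_filter, Finset.mem_product, Finset.mem_univ, true_and]
      rw [← Finset.union_assoc, Finset.union_comm W (V \ W), Finset.sdiff_union_of_subset hWV,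
        Finset.union_eq_left]
      exact hKW.trans hWV
    · rintro ⟨W, W'⟩ hx
      simp only [Finset.mem_filter, Finset.mem_product, Finset.mem_univ, true_and] at hx
      simp only [Finset.mem_sigma, Finset.mem_powerset]
      exact ⟨hx ▸ Finset.subset_union_left, Finset.inter_subset_right⟩
    · rintro ⟨W, K⟩ hy
      simp only [Finset.mem_sigma, Finset.mem_powerset] at hy
      obtain ⟨hWV, hKW⟩ := hy
      have : ((V \ W) ∪ K) ∩ W = K := by
        rw [Finset.union_inter_distrib_right, Finset.sdiff_inter_self,
          Finset.inter_eq_left.2 hKW, Finset.empty_union]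
      simp [this]
    · rintro ⟨W, W'⟩ hx
      simp only [Finset.mem_filter, Finset.mem_product, Finset.mem_univ, true_and] at hx
      have : (V \ W) ∪ (W' ∩ W) = W' := by
        ext x
        simp only [Finset.mem_union, Finset.mem_sdiff, Finset.mem_inter]
        constructor
        · rintro (⟨hxV, hxW⟩ | ⟨h1, _⟩)
          · rw [← hx] at hxV
            rcases Finset.mem_union.1 hxV with h | h
            · exact absurd h hxW
            · exact h
          · exact h1
        · intro hxW'
          by_cases hxW : x ∈ W
          · exact Or.inr ⟨hxW', hxW⟩
          · exact Or.inl ⟨hx ▸ Finset.mem_union_right W hxW', hxW⟩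
      simp [this]
    · rintro ⟨W, K⟩ _; rfl
  rw [hre, Finset.sum_sigma]
  have hinner : ∀ W ∈ V.powerset,
      ∑ K ∈ W.powerset, Qbias a W * Qbias b ((V \ W) ∪ K)
        = Qbias a W * (b ^ (V.card - W.card) * (1 - b) ^ (n - V.card)) := by
    intro W hW
    have hWV := Finset.mem_powerset.1 hW
    have hWc : W.card ≤ V.card := Finset.card_le_card hWV
    have hVW : (V \ W).card = V.card - W.card := Finset.card_sdiff_of_subset hWV
    have : ∑ K ∈ W.powerset, Qbias b ((V \ W) ∪ K)
        = b ^ (V.card - W.card) * (1 - b) ^ (n - V.card) := by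
      have hstep : ∀ K ∈ W.powerset, Qbias b ((V \ W) ∪ K)
          = (b ^ (V.card - W.card) * (1 - b) ^ (n - V.card)) *
            (b ^ K.card * (1 - b) ^ (W.card - K.card)) := by
        intro K hK
        have hKW := Finset.mem_powerset.1 hK
        have hKc : K.card ≤ W.card := Finset.card_le_card hKW
        have hdisj : Disjoint (V \ W) K :=
          Finset.disjoint_of_subset_right hKW Finset.sdiff_disjoint
        have hcard : ((V \ W) ∪ K).card = (V.card - W.card) + K.card := by
          rw [Finset.card_union_of_disjoint hdisj, hVW]
        have hexp : n - ((V.card - W.card) + K.card)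
            = (n - V.card) + (W.card - K.card) := by omega
        rw [Qbias, hcard, hexp, pow_add, pow_add]
        ring
      rw [Finset.sum_congr rfl hstep, ← Finset.mul_sum, sum_powerset_binom]
      norm_num
    rw [← this, Finset.mul_sum]
  rw [Finset.sum_congr rfl hinner]
  have hstep2 : ∀ W ∈ V.powerset,
      Qbias a W * (b ^ (V.card - W.card) * (1 - b) ^ (n - V.card))
        = (((1 - a) * (1 - b)) ^ (n - V.card)) *
          (a ^ W.card * ((1 - a) * b) ^ (V.card - W.card)) := by
    intro W hW
    have hWc : W.card ≤ V.card := Finset.card_le_card (Finset.mem_powerset.1 hW)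
    have hexp : n - W.card = (n - V.card) + (V.card - W.card) := by omega
    rw [Qbias, hexp, pow_add, mul_pow, mul_pow]
    ring
  rw [Finset.sum_congr rfl hstep2, ← Finset.mul_sum, sum_powerset_binom]
  have h1 : a + (1 - a) * b = a + b - a * b := by ring
  have h2 : (1 - a) * (1 - b) = 1 - (a + b - a * b) := by ring
  rw [h1, h2, Qbias, mul_comm]

lemma union_convolution (a b : ℝ) (f : Finset X → ℝ) :
    ∑ V : Finset X, Qbias (a + b - a * b) V * f V
      = ∑ W : Finset X, ∑ W' : Finset X, Qbias a W * Qbias b W' * f (W ∪ W') := by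
  classical
  rw [← Finset.sum_product']
  rw [← Finset.sum_fiberwise_of_maps_to (g := fun x : Finset X × Finset X => x.1 ∪ x.2)
    (t := Finset.univ) (fun x _ => Finset.mem_univ _)]
  apply Finset.sum_congr rfl
  intro V _
  have : ∀ x ∈ (Finset.univ ×ˢ Finset.univ : Finset (Finset X × Finset X)).filter
      (fun x => x.1 ∪ x.2 = V),
      Qbias a x.1 * Qbias b x.2 * f (x.1 ∪ x.2) = Qbias a x.1 * Qbias b x.2 * f V := by
    intro x hx
    rw [(Finset.mem_filter.1 hx).2]
  rw [Finset.sum_congr rfl this, ← Finset.sum_mul, conv_kernel]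

end Conv

section Counting

variable {X : Type*} [Fintype X] [DecidableEq X]

open Classical in
/-- The collection of "pathological" (large minimal) fragments for a family `ℋ` and
random set `W`, with threshold `m`. -/
noncomputable def FragSet (ℋ : Finset (Finset X)) (W : Finset X) (m : ℕ) : Finset (Finset X) :=
  Finset.univ.filter (fun T =>
    m < T.card ∧ (∃ H' ∈ ℋ, T = H' \ W) ∧
      ∀ H'' ∈ ℋ, H'' ⊆ T ∪ W → T.card ≤ (H'' \ W).card)

lemma mem_FragSet {ℋ : Finset (Finset X)} {W T : Finset X} {m : ℕ} :
    T ∈ FragSet ℋ W m ↔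
      (m < T.card ∧ (∃ H' ∈ ℋ, T = H' \ W) ∧
        ∀ H'' ∈ ℋ, H'' ⊆ T ∪ W → T.card ≤ (H'' \ W).card) := by
  simp [FragSet]

lemma countLemma (q R : ℝ) (hq0 : 0 < q) (hq1 : q < 1) (hR : 0 < R)
    (ℋ : Finset (Finset X)) (b m : ℕ) (hsize : ∀ H ∈ ℋ, H.card ≤ b) :
    ∑ W : Finset X, Qbias q W * (∑ T ∈ FragSet ℋ W m, (R⁻¹) ^ T.card)
      ≤ ∑ t ∈ Finset.Icc (m + 1) b, (b.choose t : ℝ) * ((1 - q) / (q * R)) ^ t := by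
  classical
  set n := Fintype.card X with hn
  set zq : ℝ := (1 - q) / (q * R) with hzq
  have hzq0 : 0 ≤ zq := div_nonneg (by linarith) (by positivity)
  have hq0' : 0 ≤ q := le_of_lt hq0
  have hq1' : q ≤ 1 := le_of_lt hq1
  -- rewrite LHS as a sum over pairs
  have h1 : ∑ W : Finset X, Qbias q W * (∑ T ∈ FragSet ℋ W m, (R⁻¹) ^ T.card)
      = ∑ x ∈ (Finset.univ ×ˢ Finset.univ : Finset (Finset X × Finset X)),
          (if x.2 ∈ FragSet ℋ x.1 m then Qbias q x.1 * (R⁻¹) ^ x.2.card else 0) := by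
    rw [Finset.sum_product]
    apply Finset.sum_congr rfl
    intro W _
    rw [Finset.mul_sum]
    symm
    dsimp only
    rw [Finset.sum_ite_mem, Finset.univ_inter]
  -- restrict to disjoint pairs
  have h2 : ∑ x ∈ (Finset.univ ×ˢ Finset.univ : Finset (Finset X × Finset X)),
          (if x.2 ∈ FragSet ℋ x.1 m then Qbias q x.1 * (R⁻¹) ^ x.2.card else 0)
      = ∑ x ∈ (Finset.univ ×ˢ Finset.univ : Finset (Finset X × Finset X)).filter
          (fun x => Disjoint x.1 x.2),
          (if x.2 ∈ FragSet ℋ x.1 m then Qbias q x.1 * (R⁻¹) ^ x.2.card else 0) := by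
    symm
    apply Finset.sum_subset (Finset.filter_subset _ _)
    intro x _ hx
    rw [if_neg]
    intro hmem
    apply hx
    simp only [Finset.mem_filter, Finset.mem_product, Finset.mem_univ, true_and]
    obtain ⟨_, ⟨H', _, hTeq⟩, _⟩ := mem_FragSet.1 hmem
    rw [hTeq]
    exact Finset.disjoint_sdiff
  -- reindex (W, T) ↦ (W ∪ T, T)
  have h3 : ∑ x ∈ (Finset.univ ×ˢ Finset.univ : Finset (Finset X × Finset X)).filter
          (fun x => Disjoint x.1 x.2),
          (if x.2 ∈ FragSet ℋ x.1 m then Qbias q x.1 * (R⁻¹) ^ x.2.card else 0)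
      = ∑ y ∈ (Finset.univ ×ˢ Finset.univ : Finset (Finset X × Finset X)).filter
          (fun y => y.2 ⊆ y.1),
          (if y.2 ∈ FragSet ℋ (y.1 \ y.2) m then Qbias q (y.1 \ y.2) * (R⁻¹) ^ y.2.card else 0) := by
    refine Finset.sum_nbij' (fun x : Finset X × Finset X => (x.1 ∪ x.2, x.2))
      (fun y : Finset X × Finset X => (y.1 \ y.2, y.2)) ?_ ?_ ?_ ?_ ?_
    · rintro ⟨W, T⟩ hx
      simp only [Finset.mem_filter, Finset.mem_product, Finset.mem_univ, true_and] at hx ⊢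
      exact Finset.subset_union_right
    · rintro ⟨V, T⟩ hy
      simp only [Finset.mem_filter, Finset.mem_product, Finset.mem_univ, true_and] at hy ⊢
      exact Finset.sdiff_disjoint
    · rintro ⟨W, T⟩ hx
      simp only [Finset.mem_filter, Finset.mem_product, Finset.mem_univ, true_and] at hx
      have : (W ∪ T) \ T = W := Finset.union_sdiff_cancel_right hx
      simp [this]
    · rintro ⟨V, T⟩ hy
      simp only [Finset.mem_filter, Finset.mem_product, Finset.mem_univ, true_and] at hy
      have : V \ T ∪ T = V := Finset.sdiff_union_of_subset hy
      simp [this]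
    · rintro ⟨W, T⟩ hx
      simp only [Finset.mem_filter, Finset.mem_product, Finset.mem_univ, true_and] at hx
      have : (W ∪ T) \ T = W := Finset.union_sdiff_cancel_right hx
      simp [this]
  -- pointwise rewrite of the weight
  have h4 : ∀ y ∈ (Finset.univ ×ˢ Finset.univ : Finset (Finset X × Finset X)).filter
          (fun y => y.2 ⊆ y.1),
      (if y.2 ∈ FragSet ℋ (y.1 \ y.2) m then Qbias q (y.1 \ y.2) * (R⁻¹) ^ y.2.card else 0)
        = (if y.2 ∈ FragSet ℋ (y.1 \ y.2) m then Qbias q y.1 * zq ^ y.2.card else 0) := by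
    rintro ⟨V, T⟩ hy
    simp only [Finset.mem_filter, Finset.mem_product, Finset.mem_univ, true_and] at hy
    by_cases hc : T ∈ FragSet ℋ (V \ T) m
    · rw [if_pos hc, if_pos hc]
      have hTV : T.card ≤ V.card := Finset.card_le_card hy
      have hVn : V.card ≤ n := Finset.card_le_univ V
      have hcard : (V \ T).card = V.card - T.card := Finset.card_sdiff_of_subset hy
      have hexp : n - (V.card - T.card) = (n - V.card) + T.card := by omega
      have hq : q ^ (V.card - T.card) * q ^ T.card = q ^ V.card := by
        rw [← pow_add]; congr 1; omega
      have hqt : q ^ (V.card - T.card) = q ^ V.card / q ^ T.card := by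
        rw [eq_div_iff (by positivity), hq]
      rw [Qbias, Qbias, hcard, hexp, pow_add, ← hn, hqt, hzq]
      simp only [div_eq_mul_inv, mul_pow, mul_inv, inv_pow]
      ring
    · rw [if_neg hc, if_neg hc]
  rw [h1, h2, h3, Finset.sum_congr rfl h4]
  -- regroup as sum over V of inner sums over T ⊆ V
  have h5 : ∑ y ∈ (Finset.univ ×ˢ Finset.univ : Finset (Finset X × Finset X)).filter
          (fun y => y.2 ⊆ y.1),
      (if y.2 ∈ FragSet ℋ (y.1 \ y.2) m then Qbias q y.1 * zq ^ y.2.card else 0)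
      = ∑ V : Finset X, Qbias q V *
          (∑ T ∈ Finset.univ.filter (fun T => T ⊆ V ∧ T ∈ FragSet ℋ (V \ T) m), zq ^ T.card) := by
    rw [Finset.sum_filter, Finset.sum_product]
    apply Finset.sum_congr rfl
    intro V _
    rw [Finset.mul_sum, Finset.sum_filter]
    apply Finset.sum_congr rfl
    intro T _
    by_cases h : T ⊆ V
    · simp only [if_pos h]
      by_cases h2 : T ∈ FragSet ℋ (V \ T) m
      · simp [h, h2]
      · simp [h, h2]
    · simp [h]
  rw [h5]
  -- the per-V bound
  have key : ∀ V : Finset X,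
      (∑ T ∈ Finset.univ.filter (fun T => T ⊆ V ∧ T ∈ FragSet ℋ (V \ T) m), zq ^ T.card)
        ≤ ∑ t ∈ Finset.Icc (m + 1) b, (b.choose t : ℝ) * zq ^ t := by
    intro V
    by_cases hne : (Finset.univ.filter (fun T => T ⊆ V ∧ T ∈ FragSet ℋ (V \ T) m)).Nonempty
    · obtain ⟨T₀, hT₀⟩ := hne
      simp only [Finset.mem_filter, Finset.mem_univ, true_and] at hT₀
      obtain ⟨hT₀V, hT₀frag⟩ := hT₀
      obtain ⟨hm₀, ⟨H₀, hH₀ℋ, hT₀eq⟩, hmin₀⟩ := mem_FragSet.1 hT₀frag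
      -- H₀ ⊆ V
      have hH₀V : H₀ ⊆ V := by
        intro x hx
        by_contra hxV
        have hxT : x ∈ T₀ := by
          rw [hT₀eq]
          exact Finset.mem_sdiff.2 ⟨hx, fun hc => hxV (Finset.mem_sdiff.1 hc).1⟩
        exact hxV (hT₀V hxT)
      -- every valid T is a subset of H₀
      have hsub : (Finset.univ.filter (fun T => T ⊆ V ∧ T ∈ FragSet ℋ (V \ T) m))
          ⊆ H₀.powerset.filter (fun T => m < T.card) := by
        intro T hT
        simp only [Finset.mem_filter, Finset.mem_univ, true_and] at hT
        obtain ⟨hTV, hTfrag⟩ := hT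
        obtain ⟨hm, _, hmin⟩ := mem_FragSet.1 hTfrag
        have hVdecomp : T ∪ (V \ T) = V := Finset.union_sdiff_of_subset hTV
        have hH₀sub : H₀ ⊆ T ∪ (V \ T) := by rw [hVdecomp]; exact hH₀V
        have hcard := hmin H₀ hH₀ℋ hH₀sub
        have heq : H₀ \ (V \ T) = H₀ ∩ T := by
          ext x
          simp only [Finset.mem_sdiff, Finset.mem_inter]
          constructor
          · rintro ⟨hx, hnx⟩
            refine ⟨hx, ?_⟩
            by_contra hxT
            exact hnx ⟨hH₀V hx, hxT⟩
          · rintro ⟨hx, hxT⟩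
            exact ⟨hx, fun hc => hc.2 hxT⟩
        rw [heq] at hcard
        have : H₀ ∩ T = T := Finset.eq_of_subset_of_card_le Finset.inter_subset_right hcard
        have hTH₀ : T ⊆ H₀ := by rw [← this]; exact Finset.inter_subset_left
        simp only [Finset.mem_filter, Finset.mem_powerset]
        exact ⟨hTH₀, hm⟩
      calc (∑ T ∈ Finset.univ.filter (fun T => T ⊆ V ∧ T ∈ FragSet ℋ (V \ T) m), zq ^ T.card)
          ≤ ∑ T ∈ H₀.powerset.filter (fun T => m < T.card), zq ^ T.card := by
            apply Finset.sum_le_sum_of_subset_of_nonneg hsub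
            intro T _ _
            exact pow_nonneg hzq0 _
        _ = ∑ t ∈ Finset.range (H₀.card + 1),
              (if m < t then (H₀.card.choose t : ℝ) * zq ^ t else 0) := by
            rw [Finset.sum_filter]
            rw [← Finset.sum_fiberwise_of_maps_to
              (g := fun T : Finset X => T.card) (t := Finset.range (H₀.card + 1))
              (fun T hT => by
                simp only [Finset.mem_range, Nat.lt_succ_iff]
                exact Finset.card_le_card (Finset.mem_powerset.1 hT))]
            apply Finset.sum_congr rfl
            intro t _
            have hfib : H₀.powerset.filter (fun T => T.card = t) = H₀.powersetCard t := by
              rw [Finset.powersetCard_eq_filter]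
            rw [hfib]
            have : ∀ T ∈ H₀.powersetCard t,
                (if m < T.card then zq ^ T.card else 0) = (if m < t then zq ^ t else 0) := by
              intro T hT
              rw [(Finset.mem_powersetCard.1 hT).2]
            rw [Finset.sum_congr rfl this, Finset.sum_const, Finset.card_powersetCard,
              nsmul_eq_mul]
            by_cases hmt : m < t
            · simp [hmt]
            · simp [hmt]
        _ ≤ ∑ t ∈ Finset.Icc (m + 1) b, (b.choose t : ℝ) * zq ^ t := by
            rw [← Finset.sum_filter]
            have hsub2 : (Finset.range (H₀.card + 1)).filter (fun t => m < t)
                ⊆ Finset.Icc (m + 1) b := by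
              intro t ht
              simp only [Finset.mem_filter, Finset.mem_range, Nat.lt_succ_iff] at ht
              simp only [Finset.mem_Icc]
              exact ⟨ht.2, ht.1.trans (hsize H₀ hH₀ℋ)⟩
            calc ∑ t ∈ (Finset.range (H₀.card + 1)).filter (fun t => m < t),
                  (H₀.card.choose t : ℝ) * zq ^ t
                ≤ ∑ t ∈ (Finset.range (H₀.card + 1)).filter (fun t => m < t),
                  (b.choose t : ℝ) * zq ^ t := by
                  apply Finset.sum_le_sum
                  intro t _
                  apply mul_le_mul_of_nonneg_right _ (pow_nonneg hzq0 _)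
                  exact_mod_cast Nat.choose_le_choose t (hsize H₀ hH₀ℋ)
              _ ≤ ∑ t ∈ Finset.Icc (m + 1) b, (b.choose t : ℝ) * zq ^ t := by
                  apply Finset.sum_le_sum_of_subset_of_nonneg hsub2
                  intro t _ _
                  positivity
    · rw [Finset.not_nonempty_iff_eq_empty.1 hne, Finset.sum_empty]
      apply Finset.sum_nonneg
      intro t _
      positivity
  calc ∑ V : Finset X, Qbias q V *
          (∑ T ∈ Finset.univ.filter (fun T => T ⊆ V ∧ T ∈ FragSet ℋ (V \ T) m), zq ^ T.card)
      ≤ ∑ V : Finset X, Qbias q V * (∑ t ∈ Finset.Icc (m + 1) b, (b.choose t : ℝ) * zq ^ t) := by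
        apply Finset.sum_le_sum
        intro V _
        exact mul_le_mul_of_nonneg_left (key V) (Qbias_nonneg hq0' hq1' V)
    _ = ∑ t ∈ Finset.Icc (m + 1) b, (b.choose t : ℝ) * zq ^ t := by
        rw [← Finset.sum_mul, Qbias_sum, one_mul]

end Counting

section Recursion

/-- Number of halving rounds. -/
def Lrounds : ℕ → ℕ
  | 0 => 0
  | (b + 1) => Lrounds ((b + 1) / 2) + 1
decreasing_by exact Nat.div_lt_self (Nat.succ_pos b) one_lt_two

/-- Error accumulated by the halving recursion. -/
noncomputable def epsB (z : ℝ) : ℕ → ℝ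
  | 0 => 0
  | (b + 1) => epsB z ((b + 1) / 2) + 2 * (4 * z) ^ ((b + 1) / 2 + 1)
decreasing_by exact Nat.div_lt_self (Nat.succ_pos b) one_lt_two

lemma Lrounds_succ (b : ℕ) : Lrounds (b + 1) = Lrounds ((b + 1) / 2) + 1 := by
  rw [Lrounds]

lemma epsB_succ (z : ℝ) (b : ℕ) :
    epsB z (b + 1) = epsB z ((b + 1) / 2) + 2 * (4 * z) ^ ((b + 1) / 2 + 1) := by
  rw [epsB]

lemma epsB_nonneg {z : ℝ} (hz : 0 ≤ z) : ∀ b, 0 ≤ epsB z b := by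
  intro b
  induction b using Nat.strong_induction_on with
  | _ b ih =>
    match b with
    | 0 => simp [epsB]
    | (b + 1) =>
      rw [epsB_succ]
      have h1 := ih ((b + 1) / 2) (Nat.div_lt_self (Nat.succ_pos b) one_lt_two)
      have h2 : (0:ℝ) ≤ 2 * (4 * z) ^ ((b + 1) / 2 + 1) := by positivity
      linarith

lemma epsB_le_partial {z : ℝ} (hz : 0 ≤ z) :
    ∀ b, epsB z b ≤ 2 * ∑ e ∈ Finset.Icc 1 b, (4 * z) ^ e := by
  intro b
  induction b using Nat.strong_induction_on with
  | _ b ih =>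
    match b with
    | 0 => simp [epsB]
    | (b + 1) =>
      rw [epsB_succ]
      set b' := (b + 1) / 2 with hb'
      have hblt : b' < b + 1 := Nat.div_lt_self (Nat.succ_pos b) one_lt_two
      have h1 := ih b' hblt
      have h2 : 2 * ∑ e ∈ Finset.Icc 1 b', (4 * z) ^ e + 2 * (4 * z) ^ (b' + 1)
          = 2 * ∑ e ∈ Finset.Icc 1 (b' + 1), (4 * z) ^ e := by
        rw [Finset.sum_Icc_succ_top (show 1 ≤ b' + 1 by omega) (fun e => (4 * z) ^ e)]
        ring
      have h3 : 2 * ∑ e ∈ Finset.Icc 1 (b' + 1), (4 * z) ^ e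
          ≤ 2 * ∑ e ∈ Finset.Icc 1 (b + 1), (4 * z) ^ e := by
        have : Finset.Icc 1 (b' + 1) ⊆ Finset.Icc 1 (b + 1) := by
          apply Finset.Icc_subset_Icc le_rfl
          omega
        have := Finset.sum_le_sum_of_subset_of_nonneg (f := fun e => (4*z)^e) this
          (fun i _ _ => by positivity)
        linarith
      linarith

lemma geom_aux {r : ℝ} (h0 : 0 ≤ r) (h2 : r ≤ 1 / 2) (n : ℕ) :
    ∑ j ∈ Finset.range n, r ^ j ≤ 2 := by
  calc ∑ j ∈ Finset.range n, r ^ j ≤ ∑ j ∈ Finset.range n, (1 / 2 : ℝ) ^ j := by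
        apply Finset.sum_le_sum
        intro j _
        exact pow_le_pow_left₀ h0 h2 j
    _ ≤ 2 := sum_geometric_two_le n

lemma epsB_le {z : ℝ} (hz : 0 ≤ z) (hz2 : 4 * z ≤ 1 / 2) (b : ℕ) : epsB z b ≤ 16 * z := by
  have h1 := epsB_le_partial hz b
  have h2 : ∑ e ∈ Finset.Icc 1 b, (4 * z) ^ e ≤ 8 * z := by
    rcases Nat.eq_zero_or_pos b with hb | hb
    · subst hb
      rw [Finset.Icc_eq_empty (by norm_num), Finset.sum_empty]
      linarith
    have : Finset.Icc 1 b = Finset.Ico 1 (b + 1) := by rw [Finset.Ico_add_one_right_eq_Icc]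
    rw [this, Finset.sum_Ico_eq_sum_range]
    have hstep : ∀ i ∈ Finset.range (b + 1 - 1), (4 * z) ^ (1 + i) = (4 * z) * (4 * z) ^ i := by
      intro i _
      rw [pow_add, pow_one]
    rw [Finset.sum_congr rfl hstep, ← Finset.mul_sum]
    have hge := geom_aux (by linarith) hz2 (b + 1 - 1)
    have h40 : 0 ≤ 4 * z := by linarith
    nlinarith
  linarith

lemma Lrounds_le_log : ∀ b : ℕ, 1 ≤ b → Lrounds b ≤ Nat.log 2 b + 1 := by
  intro b
  induction b using Nat.strong_induction_on with
  | _ b ih =>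
    match b with
    | 0 => omega
    | (b + 1) =>
      intro _
      rw [Lrounds_succ]
      rcases Nat.lt_or_ge (b + 1) 2 with hb | hb
      · have hb0 : b = 0 := by omega
        subst hb0
        simp [Lrounds]
      · have hb' : 1 ≤ (b + 1) / 2 := by omega
        have hlt : (b + 1) / 2 < b + 1 := Nat.div_lt_self (Nat.succ_pos b) one_lt_two
        have hih := ih ((b + 1) / 2) hlt hb'
        have hlog : Nat.log 2 ((b + 1) / 2) = Nat.log 2 (b + 1) - 1 := Nat.log_div_base 2 (b+1)
        have hpos : 0 < Nat.log 2 (b + 1) := Nat.log_pos one_lt_two hb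
        omega

lemma choose_le_two_pow' (n t : ℕ) : (n.choose t : ℝ) ≤ 2 ^ n := by
  have : n.choose t ≤ 2 ^ n := by
    rcases le_or_gt t n with h | h
    · calc n.choose t ≤ ∑ m ∈ Finset.range (n + 1), n.choose m :=
          Finset.single_le_sum (fun i _ => Nat.zero_le _) (Finset.mem_range.2 (by omega))
        _ = 2 ^ n := Nat.sum_range_choose n
    · rw [Nat.choose_eq_zero_of_lt h]; positivity
  calc (n.choose t : ℝ) ≤ ((2:ℕ) ^ n : ℕ) := by exact_mod_cast this
    _ = 2 ^ n := by push_cast; ring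

lemma round_error_bound {z : ℝ} (hz : 0 ≤ z) (hz2 : 4 * z ≤ 1 / 2) (b : ℕ) :
    ∑ t ∈ Finset.Icc ((b + 1) / 2 + 1) (b + 1), ((b + 1).choose t : ℝ) * z ^ t
      ≤ 2 * (4 * z) ^ ((b + 1) / 2 + 1) := by
  set m := (b + 1) / 2 + 1 with hm
  have h1 : ∀ t ∈ Finset.Icc m (b + 1), ((b + 1).choose t : ℝ) * z ^ t ≤ (4 * z) ^ t := by
    intro t ht
    simp only [Finset.mem_Icc, hm] at ht
    have h2t : b + 1 ≤ 2 * t := by omega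
    have : ((b + 1).choose t : ℝ) ≤ 4 ^ t := by
      calc ((b + 1).choose t : ℝ) ≤ 2 ^ (b + 1) := choose_le_two_pow' _ _
        _ ≤ 2 ^ (2 * t) := by
            apply pow_le_pow_right₀ (by norm_num) h2t
        _ = 4 ^ t := by rw [pow_mul]; norm_num
    calc ((b + 1).choose t : ℝ) * z ^ t ≤ 4 ^ t * z ^ t := by
          apply mul_le_mul_of_nonneg_right this (pow_nonneg hz t)
      _ = (4 * z) ^ t := by rw [mul_pow]
  calc ∑ t ∈ Finset.Icc m (b + 1), ((b + 1).choose t : ℝ) * z ^ t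
      ≤ ∑ t ∈ Finset.Icc m (b + 1), (4 * z) ^ t := Finset.sum_le_sum h1
    _ ≤ 2 * (4 * z) ^ m := by
        rcases le_or_gt m (b + 1) with hmb | hmb
        · rw [← Finset.Ico_add_one_right_eq_Icc, Finset.sum_Ico_eq_sum_range]
          have hstep : ∀ i ∈ Finset.range (b + 1 + 1 - m), (4 * z) ^ (m + i)
              = (4 * z) ^ m * (4 * z) ^ i := fun i _ => pow_add _ _ _
          rw [Finset.sum_congr rfl hstep, ← Finset.mul_sum]
          have hge := geom_aux (by linarith) hz2 (b + 1 + 1 - m)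
          have h40 : (0:ℝ) ≤ (4 * z) ^ m := by positivity
          nlinarith
        · rw [Finset.Icc_eq_empty (by omega), Finset.sum_empty]
          positivity

end Recursion

section Main

variable {X : Type*} [Fintype X] [DecidableEq X]

open Classical in
lemma mainInduction (q R : ℝ) (hq0 : 0 < q) (hq1 : q < 1) (hR : 0 < R)
    (hz2 : 4 * ((1 - q) / (q * R)) ≤ 1 / 2) :
    ∀ b : ℕ, ∀ w : Finset X → ℝ,
    (∀ H, 0 ≤ w H) →
    (∀ H, w H ≠ 0 → H.Nonempty ∧ H.card ≤ b) →
    (∑ H : Finset X, w H) ≤ 1 →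
    (∀ T : Finset X, T.Nonempty →
      ∑ H ∈ Finset.univ.filter (fun H => T ⊆ H), w H ≤ R⁻¹ ^ T.card) →
    ∀ p : ℝ, 0 ≤ p → p ≤ 1 → 1 - p ≤ (1 - q) ^ Lrounds b →
    ∑ V ∈ Finset.univ.filter (fun V : Finset X => ¬ ∃ H, w H ≠ 0 ∧ H ⊆ V), Qbias p V
      ≤ 1 - (∑ H : Finset X, w H) + epsB ((1 - q) / (q * R)) b := by
  have h1q : (0:ℝ) < 1 - q := by linarith
  have hz0 : (0:ℝ) ≤ (1 - q) / (q * R) := div_nonneg (by linarith) (by positivity)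
  intro b
  induction b using Nat.strong_induction_on with
  | _ b ih =>
  match b with
  | 0 =>
    intro w hw0 hsupp htot hspread p hp0 hp1 hpL
    have htot0 : ∑ H : Finset X, w H = 0 := by
      apply Finset.sum_eq_zero
      intro H _
      by_contra h
      obtain ⟨hne, hcard⟩ := hsupp H h
      rw [Nat.le_zero, Finset.card_eq_zero] at hcard
      rw [hcard] at hne
      exact Finset.not_nonempty_empty hne
    rw [htot0]
    have h1 : ∑ V ∈ Finset.univ.filter (fun V : Finset X => ¬ ∃ H, w H ≠ 0 ∧ H ⊆ V), Qbias p V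
        ≤ ∑ V : Finset X, Qbias p V :=
      Finset.sum_le_sum_of_subset_of_nonneg (Finset.filter_subset _ _)
        (fun V _ _ => Qbias_nonneg hp0 hp1 V)
    rw [Qbias_sum] at h1
    have : epsB ((1 - q) / (q * R)) 0 = 0 := by simp [epsB]
    rw [this]
    linarith
  | (b + 1) =>
    intro w hw0 hsupp htot hspread p hp0 hp1 hpL
    set z : ℝ := (1 - q) / (q * R) with hzdef
    set b' : ℕ := (b + 1) / 2 with hb'def
    have hb'lt : b' < b + 1 := Nat.div_lt_self (Nat.succ_pos b) one_lt_two
    set p' : ℝ := 1 - (1 - p) / (1 - q) with hp'def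
    have hpeq : q + p' - q * p' = p := by
      rw [hp'def]
      field_simp
      ring
    have hp'L : 1 - p' ≤ (1 - q) ^ Lrounds b' := by
      have h2 : 1 - p' = (1 - p) / (1 - q) := by rw [hp'def]; ring
      rw [h2, div_le_iff₀ h1q, ← pow_succ]
      rw [Lrounds_succ] at hpL
      exact hpL
    have hp'1 : p' ≤ 1 := by
      have : 0 ≤ (1 - p) / (1 - q) := div_nonneg (by linarith) (le_of_lt h1q)
      rw [hp'def]; linarith
    have hp'0 : 0 ≤ p' := by
      have h2 : (1 - q) ^ Lrounds b' ≤ 1 := pow_le_one₀ (by linarith) (by linarith)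
      linarith
    -- the failure indicator
    set f : Finset X → ℝ := fun U => if ∃ H, w H ≠ 0 ∧ H ⊆ U then 0 else 1 with hfdef
    have hf01 : ∀ U, 0 ≤ f U ∧ f U ≤ 1 := by
      intro U
      rw [hfdef]
      by_cases h : ∃ H, w H ≠ 0 ∧ H ⊆ U <;> simp [h]
    -- rewrite the LHS via the two-round decomposition
    have hLHS : ∑ V ∈ Finset.univ.filter (fun V : Finset X => ¬ ∃ H, w H ≠ 0 ∧ H ⊆ V), Qbias p V
        = ∑ W : Finset X, ∑ V' : Finset X, Qbias q W * Qbias p' V' * f (W ∪ V') := by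
      rw [← union_convolution q p' f]
      rw [Finset.sum_filter]
      apply Finset.sum_congr rfl
      intro V _
      by_cases h : ∃ H, w H ≠ 0 ∧ H ⊆ V
      · rw [if_neg (by exact not_not_intro h), hpeq, hfdef]
        simp [h]
      · rw [if_pos h, hpeq, hfdef]
        simp [h]
    rw [hLHS]
    set S0 : Finset (Finset X) := Finset.univ.filter (fun H => w H ≠ 0) with hS0def
    have hS0size : ∀ H ∈ S0, H.card ≤ b + 1 := by
      intro H hH
      rw [hS0def, Finset.mem_filter] at hH
      exact (hsupp H hH.2).2
    -- the per-W inner bound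
    have inner_bound : ∀ W : Finset X,
        (∑ V' : Finset X, Qbias p' V' * f (W ∪ V'))
          ≤ (1 - ∑ H : Finset X, w H) + epsB z b' + ∑ T ∈ FragSet S0 W b', R⁻¹ ^ T.card := by
      intro W
      have hlost0 : (0:ℝ) ≤ ∑ T ∈ FragSet S0 W b', R⁻¹ ^ T.card := by
        apply Finset.sum_nonneg
        intro T _
        positivity
      have heps0 : 0 ≤ epsB z b' := epsB_nonneg hz0 b'
      by_cases hcase : ∃ H, w H ≠ 0 ∧ H ⊆ W
      · have hzero : ∀ V' : Finset X, Qbias p' V' * f (W ∪ V') = 0 := by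
          intro V'
          obtain ⟨H, hH, hHW⟩ := hcase
          have : f (W ∪ V') = 0 := by
            rw [hfdef]
            exact if_pos ⟨H, hH, hHW.trans Finset.subset_union_left⟩
          rw [this, mul_zero]
        rw [Finset.sum_eq_zero (fun V' _ => hzero V')]
        linarith
      · -- choose minimizers
        have hchoice : ∀ H : Finset X, ∃ G : Finset X, w H ≠ 0 →
            (w G ≠ 0 ∧ G ⊆ H ∪ W ∧
              ∀ H'', w H'' ≠ 0 → H'' ⊆ H ∪ W → (G \ W).card ≤ (H'' \ W).card) := by
          intro H
          by_cases hH : w H ≠ 0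
          · have hne : (S0.filter (fun H' => H' ⊆ H ∪ W)).Nonempty := by
              refine ⟨H, ?_⟩
              rw [Finset.mem_filter, hS0def, Finset.mem_filter]
              exact ⟨⟨Finset.mem_univ _, hH⟩, Finset.subset_union_left⟩
            obtain ⟨G, hGmem, hGmin⟩ :=
              Finset.exists_min_image _ (fun H' => (H' \ W).card) hne
            rw [Finset.mem_filter, hS0def, Finset.mem_filter] at hGmem
            refine ⟨G, fun _ => ⟨hGmem.1.2, hGmem.2, ?_⟩⟩
            intro H'' hH''0 hH''sub
            apply hGmin
            rw [Finset.mem_filter, hS0def, Finset.mem_filter]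
            exact ⟨⟨Finset.mem_univ _, hH''0⟩, hH''sub⟩
          · exact ⟨∅, fun h => absurd h hH⟩
        choose g hg using hchoice
        have hfragsub : ∀ H, w H ≠ 0 → g H \ W ⊆ H := by
          intro H hH x hx
          rw [Finset.mem_sdiff] at hx
          rcases Finset.mem_union.1 ((hg H hH).2.1 hx.1) with h | h
          · exact h
          · exact absurd h hx.2
        have hfragne : ∀ H, w H ≠ 0 → (g H \ W).Nonempty := by
          intro H hH
          rw [Finset.nonempty_iff_ne_empty]
          intro hemp
          rw [Finset.sdiff_eq_empty_iff_subset] at hemp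
          exact hcase ⟨g H, (hg H hH).1, hemp⟩
        set bigS : Finset (Finset X) := S0.filter (fun H => (g H \ W).card ≤ b') with hbigSdef
        set lostS : Finset (Finset X) := S0.filter (fun H => ¬ (g H \ W).card ≤ b')
          with hlostSdef
        set w' : Finset X → ℝ := fun T => ∑ H ∈ bigS.filter (fun H => g H \ W = T), w H
          with hw'def
        have hmem_bigS : ∀ H ∈ bigS, w H ≠ 0 ∧ (g H \ W).card ≤ b' := by
          intro H hH
          rw [hbigSdef, Finset.mem_filter, hS0def, Finset.mem_filter] at hH
          exact ⟨hH.1.2, hH.2⟩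
        -- IH hypotheses
        have hw'0 : ∀ T, 0 ≤ w' T := by
          intro T
          apply Finset.sum_nonneg
          intro H _
          exact hw0 H
        have hw'supp : ∀ T, w' T ≠ 0 → T.Nonempty ∧ T.card ≤ b' := by
          intro T hT
          obtain ⟨H, hHmem, hHne⟩ := Finset.exists_ne_zero_of_sum_ne_zero hT
          rw [Finset.mem_filter] at hHmem
          obtain ⟨hHbig, hHfrag⟩ := hHmem
          obtain ⟨hH0, hHcard⟩ := hmem_bigS H hHbig
          constructor
          · rw [← hHfrag]; exact hfragne H hH0
          · rw [← hHfrag]; exact hHcard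
        have hfibtot : ∑ T : Finset X, w' T = ∑ H ∈ bigS, w H := by
          rw [hw'def]
          rw [Finset.sum_fiberwise_eq_sum_filter bigS Finset.univ (fun H => g H \ W) w]
          congr 1
          apply Finset.filter_true_of_mem
          intro H _
          exact Finset.mem_univ _
        have hw'tot : ∑ T : Finset X, w' T ≤ 1 := by
          rw [hfibtot]
          calc ∑ H ∈ bigS, w H ≤ ∑ H : Finset X, w H :=
              Finset.sum_le_sum_of_subset_of_nonneg (Finset.subset_univ _)
                (fun H _ _ => hw0 H)
            _ ≤ 1 := htot
        have hw'spread : ∀ T₀ : Finset X, T₀.Nonempty →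
            ∑ H' ∈ Finset.univ.filter (fun H' => T₀ ⊆ H'), w' H' ≤ R⁻¹ ^ T₀.card := by
          intro T₀ hT₀
          rw [hw'def]
          rw [Finset.sum_fiberwise_eq_sum_filter bigS
            (Finset.univ.filter (fun H' => T₀ ⊆ H')) (fun H => g H \ W) w]
          calc ∑ H ∈ bigS.filter
                (fun H => g H \ W ∈ Finset.univ.filter (fun H' => T₀ ⊆ H')), w H
              ≤ ∑ H ∈ Finset.univ.filter (fun H => T₀ ⊆ H), w H := by
                apply Finset.sum_le_sum_of_subset_of_nonneg _ (fun H _ _ => hw0 H)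
                intro H hH
                rw [Finset.mem_filter] at hH
                obtain ⟨hHbig, hHT⟩ := hH
                rw [Finset.mem_filter] at hHT
                rw [Finset.mem_filter]
                refine ⟨Finset.mem_univ _, ?_⟩
                exact hHT.2.trans (hfragsub H (hmem_bigS H hHbig).1)
            _ ≤ R⁻¹ ^ T₀.card := hspread T₀ hT₀
        have ihc := ih b' hb'lt w' hw'0 hw'supp hw'tot hw'spread p' hp'0 hp'1 hp'L
        -- innerCore is at most the IH left-hand side
        have hcore : (∑ V' : Finset X, Qbias p' V' * f (W ∪ V'))
            ≤ ∑ V' ∈ Finset.univ.filter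
                (fun V' : Finset X => ¬ ∃ T, w' T ≠ 0 ∧ T ⊆ V'), Qbias p' V' := by
          rw [Finset.sum_filter]
          apply Finset.sum_le_sum
          intro V' _
          by_cases hc : ∃ T, w' T ≠ 0 ∧ T ⊆ V'
          · rw [if_neg (not_not_intro hc)]
            obtain ⟨T, hT0, hTV⟩ := hc
            obtain ⟨H, hHmem, hHne⟩ := Finset.exists_ne_zero_of_sum_ne_zero hT0
            rw [Finset.mem_filter] at hHmem
            obtain ⟨hHbig, hHfrag⟩ := hHmem
            have hgsub : g H ⊆ W ∪ V' := by
              intro x hx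
              by_cases hxW : x ∈ W
              · exact Finset.mem_union_left _ hxW
              · have : x ∈ g H \ W := Finset.mem_sdiff.2 ⟨hx, hxW⟩
                rw [hHfrag] at this
                exact Finset.mem_union_right _ (hTV this)
            have : f (W ∪ V') = 0 := by
              rw [hfdef]
              exact if_pos ⟨g H, (hg H (hmem_bigS H hHbig).1).1, hgsub⟩
            rw [this, mul_zero]
          · rw [if_pos hc]
            calc Qbias p' V' * f (W ∪ V') ≤ Qbias p' V' * 1 :=
                mul_le_mul_of_nonneg_left (hf01 _).2 (Qbias_nonneg hp'0 hp'1 V')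
              _ = Qbias p' V' := mul_one _
        -- mass accounting
        have hsplit : ∑ H ∈ bigS, w H + ∑ H ∈ lostS, w H = ∑ H ∈ S0, w H := by
          rw [hbigSdef, hlostSdef]
          exact Finset.sum_filter_add_sum_filter_not S0 _ w
        have hS0tot : ∑ H ∈ S0, w H = ∑ H : Finset X, w H := by
          rw [hS0def]
          exact Finset.sum_filter_of_ne (fun H _ h => h)
        -- the lost mass is at most the fragment cost
        have hlostbound : ∑ H ∈ lostS, w H ≤ ∑ T ∈ FragSet S0 W b', R⁻¹ ^ T.card := by
          have hmem_lostS : ∀ H ∈ lostS, w H ≠ 0 ∧ b' < (g H \ W).card := by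
            intro H hH
            rw [hlostSdef, Finset.mem_filter, hS0def, Finset.mem_filter] at hH
            exact ⟨hH.1.2, Nat.lt_of_not_le hH.2⟩
          have hfib2 : ∑ T : Finset X,
              (∑ H ∈ lostS.filter (fun H => g H \ W = T), w H) = ∑ H ∈ lostS, w H := by
            rw [Finset.sum_fiberwise_eq_sum_filter lostS Finset.univ (fun H => g H \ W) w]
            congr 1
            apply Finset.filter_true_of_mem
            intro H _
            exact Finset.mem_univ _
          rw [← hfib2]
          have hvanish : ∀ T ∈ (Finset.univ : Finset (Finset X)), T ∉ FragSet S0 W b' →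
              (∑ H ∈ lostS.filter (fun H => g H \ W = T), w H) = 0 := by
            intro T _ hTnot
            apply Finset.sum_eq_zero
            intro H hH
            exfalso
            apply hTnot
            rw [Finset.mem_filter] at hH
            obtain ⟨hHlost, hHfrag⟩ := hH
            obtain ⟨hH0, hHcard⟩ := hmem_lostS H hHlost
            rw [mem_FragSet]
            refine ⟨hHfrag ▸ hHcard, ⟨g H, ?_, hHfrag.symm⟩, ?_⟩
            · rw [hS0def, Finset.mem_filter]
              exact ⟨Finset.mem_univ _, (hg H hH0).1⟩
            · intro H'' hH''mem hH''sub
              rw [hS0def, Finset.mem_filter] at hH''mem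
              have hTW : T ∪ W ⊆ H ∪ W := by
                apply Finset.union_subset_union_left
                rw [← hHfrag]
                exact hfragsub H hH0
              have := (hg H hH0).2.2 H'' hH''mem.2 (hH''sub.trans hTW)
              rw [hHfrag] at this
              exact this
          rw [← Finset.sum_subset (Finset.subset_univ (FragSet S0 W b')) hvanish]
          apply Finset.sum_le_sum
          intro T hT
          rw [mem_FragSet] at hT
          have hTne : T.Nonempty := Finset.card_pos.1 (by omega)
          calc ∑ H ∈ lostS.filter (fun H => g H \ W = T), w H
              ≤ ∑ H ∈ Finset.univ.filter (fun H => T ⊆ H), w H := by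
                apply Finset.sum_le_sum_of_subset_of_nonneg _ (fun H _ _ => hw0 H)
                intro H hH
                rw [Finset.mem_filter] at hH
                obtain ⟨hHlost, hHfrag⟩ := hH
                rw [Finset.mem_filter]
                refine ⟨Finset.mem_univ _, ?_⟩
                rw [← hHfrag]
                exact hfragsub H (hmem_lostS H hHlost).1
            _ ≤ R⁻¹ ^ T.card := hspread T hTne
        calc (∑ V' : Finset X, Qbias p' V' * f (W ∪ V'))
            ≤ 1 - ∑ T : Finset X, w' T + epsB z b' := le_trans hcore ihc
          _ ≤ (1 - ∑ H : Finset X, w H) + epsB z b'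
              + ∑ T ∈ FragSet S0 W b', R⁻¹ ^ T.card := by
              rw [hfibtot]
              have : ∑ H : Finset X, w H ≤ ∑ H ∈ bigS, w H
                  + ∑ T ∈ FragSet S0 W b', R⁻¹ ^ T.card := by
                rw [← hS0tot, ← hsplit]
                linarith [hlostbound]
              linarith
    -- combine over W
    have hfact : ∀ W : Finset X, ∑ V' : Finset X, Qbias q W * Qbias p' V' * f (W ∪ V')
        = Qbias q W * ∑ V' : Finset X, Qbias p' V' * f (W ∪ V') := by
      intro W
      rw [Finset.mul_sum]
      apply Finset.sum_congr rfl
      intro V' _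
      rw [mul_assoc]
    rw [Finset.sum_congr rfl (fun W _ => hfact W)]
    have hq0' : 0 ≤ q := le_of_lt hq0
    have hq1' : q ≤ 1 := le_of_lt hq1
    calc ∑ W : Finset X, Qbias q W * ∑ V' : Finset X, Qbias p' V' * f (W ∪ V')
        ≤ ∑ W : Finset X, Qbias q W * ((1 - ∑ H : Finset X, w H) + epsB z b'
            + ∑ T ∈ FragSet S0 W b', R⁻¹ ^ T.card) := by
          apply Finset.sum_le_sum
          intro W _
          exact mul_le_mul_of_nonneg_left (inner_bound W) (Qbias_nonneg hq0' hq1' W)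
      _ = (1 - ∑ H : Finset X, w H) + epsB z b'
            + ∑ W : Finset X, Qbias q W * ∑ T ∈ FragSet S0 W b', R⁻¹ ^ T.card := by
          rw [Finset.sum_congr rfl (fun W _ => mul_add (Qbias q W) _ _),
            Finset.sum_add_distrib, ← Finset.sum_mul, Qbias_sum, one_mul]
      _ ≤ (1 - ∑ H : Finset X, w H) + epsB z b'
            + ∑ t ∈ Finset.Icc (b' + 1) (b + 1), ((b + 1).choose t : ℝ) * z ^ t := by
          have := countLemma q R hq0 hq1 hR S0 (b + 1) b' hS0size
          rw [hzdef]
          linarith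
      _ ≤ (1 - ∑ H : Finset X, w H) + epsB z b' + 2 * (4 * z) ^ (b' + 1) := by
          have := round_error_bound hz0 hz2 b
          rw [hzdef, hb'def]
          linarith
      _ = 1 - (∑ H : Finset X, w H) + epsB z (b + 1) := by
          rw [epsB_succ, hb'def]
          ring

end Main

/-- spread lemma: there is a universal constant C such that for every
k ≥ 2, R > 1, a collection 𝒜 of subsets of X of size ≤ k carrying an R-spread
measure π, and every p with C(log k)/R ≤ p ≤ 1, a p-biased random subset V contains
an element of 𝒜 with probability at least 0.9. -/
theorem stmt11 :
    ∃ C : ℝ, 0 < C ∧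
      ∀ (X : Type) [Fintype X] [DecidableEq X] (k : ℕ), 2 ≤ k →
      ∀ R : ℝ, 1 < R →
      ∀ 𝒜 : Finset (Finset X), (∀ A ∈ 𝒜, A.card ≤ k) →
      ∀ π : Finset X → ℝ, (∀ A, 0 ≤ π A) → (∑ A : Finset X, π A = 1) →
      (∀ A : Finset X, π A ≠ 0 → A ∈ 𝒜) →
      (∀ S : Finset X,
        ∑ A ∈ Finset.univ.filter (fun A : Finset X => S ⊆ A), π A ≤ 1 / R ^ S.card) →
      ∀ p : ℝ, C * Real.log k / R ≤ p → p ≤ 1 →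
      (0.9 : ℝ) ≤
        ∑ V ∈ Finset.univ.filter (fun V : Finset X => ∃ A ∈ 𝒜, A ⊆ V), Qbias p V := by
  classical
  refine ⟨1000, by norm_num, ?_⟩
  intro X _ _ k hk R hR 𝒜 h𝒜card π hπ0 hπtot hπsupp hπspread p hplow hp1
  have hR0 : (0:ℝ) < R := by linarith
  have hk0 : (0:ℝ) < k := by positivity
  have hlog2pos : (0:ℝ) < Real.log 2 := Real.log_pos (by norm_num)
  have hlogk2 : Real.log 2 ≤ Real.log k := by
    apply Real.log_le_log (by norm_num)
    exact_mod_cast hk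
  have hlogkpos : 0 < Real.log k := lt_of_lt_of_le hlog2pos hlogk2
  have hlog2lb : (0.6931:ℝ) ≤ Real.log 2 := by
    have := Real.log_two_gt_d9
    linarith
  have hp0 : 0 ≤ p := by
    have : 0 < 1000 * Real.log k / R := by positivity
    linarith
  -- R is large
  have hRC : 1000 * Real.log k ≤ R := by
    have h1 : 1000 * Real.log k / R ≤ 1 := le_trans hplow hp1
    rwa [div_le_one hR0] at h1
  have hR600 : (600:ℝ) ≤ R := by nlinarith
  -- trivial case: ∅ has positive mass
  by_cases hpi0 : π ∅ ≠ 0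
  · have hAe : ∅ ∈ 𝒜 := hπsupp ∅ hpi0
    have : Finset.univ.filter (fun V : Finset X => ∃ A ∈ 𝒜, A ⊆ V) = Finset.univ := by
      apply Finset.filter_true_of_mem
      intro V _
      exact ⟨∅, hAe, Finset.empty_subset V⟩
    rw [this, Qbias_sum]
    norm_num
  push_neg at hpi0
  -- parameters
  set q : ℝ := 160 / R with hqdef
  have hq0 : 0 < q := by positivity
  have hq1 : q < 1 := by
    rw [hqdef, div_lt_one hR0]
    linarith
  have hqR : q * R = 160 := by
    rw [hqdef]
    field_simp
  have hz2 : 4 * ((1 - q) / (q * R)) ≤ 1 / 2 := by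
    rw [hqR]
    have : (1 - q) / 160 ≤ 1 / 160 := by
      apply div_le_div_of_nonneg_right _ (by norm_num)
      · linarith
    linarith
  -- hypotheses for the main induction
  have hsupp : ∀ H : Finset X, π H ≠ 0 → H.Nonempty ∧ H.card ≤ k := by
    intro H hH
    constructor
    · rw [Finset.nonempty_iff_ne_empty]
      intro h
      rw [h] at hH
      exact hH hpi0
    · exact h𝒜card H (hπsupp H hH)
  have htot : ∑ H : Finset X, π H ≤ 1 := le_of_eq hπtot
  have hspread : ∀ T : Finset X, T.Nonempty →
      ∑ H ∈ Finset.univ.filter (fun H => T ⊆ H), π H ≤ R⁻¹ ^ T.card := by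
    intro T _
    have := hπspread T
    rwa [one_div, ← inv_pow] at this
  -- the Bernoulli / log bound
  have hL2 : (Lrounds k : ℝ) * Real.log 2 ≤ 2 * Real.log k := by
    have hLnat : Lrounds k ≤ Nat.log 2 k + 1 := Lrounds_le_log k (by omega)
    have hcast : (Nat.log 2 k : ℝ) * Real.log 2 ≤ Real.log k := by
      have h1 : ((2:ℕ):ℝ) ^ (Nat.log 2 k) ≤ (k:ℝ) := by
        exact_mod_cast Nat.pow_log_le_self 2 (by omega)
      have h2 := Real.log_le_log (by positivity) h1
      rwa [Real.log_pow, Nat.cast_ofNat] at h2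
    have hLc : (Lrounds k : ℝ) ≤ (Nat.log 2 k : ℝ) + 1 := by exact_mod_cast hLnat
    have h3 : (Lrounds k : ℝ) * Real.log 2 ≤ ((Nat.log 2 k : ℝ) + 1) * Real.log 2 :=
      mul_le_mul_of_nonneg_right hLc (le_of_lt hlog2pos)
    calc (Lrounds k : ℝ) * Real.log 2 ≤ ((Nat.log 2 k : ℝ) + 1) * Real.log 2 := h3
      _ = (Nat.log 2 k : ℝ) * Real.log 2 + Real.log 2 := by ring
      _ ≤ Real.log k + Real.log k := by
          apply add_le_add hcast hlogk2
      _ = 2 * Real.log k := by ring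
  have hL160 : (Lrounds k : ℝ) * 160 ≤ 1000 * Real.log k := by
    have hL0 : (0:ℝ) ≤ (Lrounds k : ℝ) := Nat.cast_nonneg _
    have h1 : (Lrounds k : ℝ) * 0.6931 ≤ (Lrounds k : ℝ) * Real.log 2 :=
      mul_le_mul_of_nonneg_left hlog2lb hL0
    linarith
  have hLqp : (Lrounds k : ℝ) * q ≤ p := by
    have h1 : (Lrounds k : ℝ) * q = (Lrounds k : ℝ) * 160 / R := by
      rw [hqdef]; ring
    have h2 : (Lrounds k : ℝ) * 160 / R ≤ 1000 * Real.log k / R := by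
      gcongr
    rw [h1]
    exact le_trans h2 hplow
  have hpL : 1 - p ≤ (1 - q) ^ Lrounds k := by
    have hBer := one_add_mul_le_pow (show (-2:ℝ) ≤ -q by linarith) (Lrounds k)
    have : (1:ℝ) + (Lrounds k : ℝ) * (-q) = 1 - (Lrounds k : ℝ) * q := by ring
    rw [this] at hBer
    have h1 : (1:ℝ) + -q = 1 - q := by ring
    rw [h1] at hBer
    linarith
  -- apply the main induction
  have hmain := mainInduction q R hq0 hq1 hR0 hz2 k π hπ0 hsupp htot hspread p hp0 hp1 hpL
  rw [hπtot] at hmain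
  have hepsb : epsB ((1 - q) / (q * R)) k ≤ 0.1 := by
    have hz0 : (0:ℝ) ≤ (1 - q) / (q * R) := div_nonneg (by linarith) (by positivity)
    have h1 := epsB_le hz0 hz2 k
    have h2 : (1 - q) / (q * R) ≤ 1 / 160 := by
      rw [hqR]
      apply div_le_div_of_nonneg_right _ (by norm_num)
      · linarith
    linarith
  have hbad : ∑ V ∈ Finset.univ.filter (fun V : Finset X => ¬ ∃ H, π H ≠ 0 ∧ H ⊆ V),
      Qbias p V ≤ 0.1 := by
    calc ∑ V ∈ Finset.univ.filter (fun V : Finset X => ¬ ∃ H, π H ≠ 0 ∧ H ⊆ V), Qbias p V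
        ≤ 1 - 1 + epsB ((1 - q) / (q * R)) k := hmain
      _ ≤ 0.1 := by linarith
  -- conclude
  have hsplit := Finset.sum_filter_add_sum_filter_not Finset.univ
    (fun V : Finset X => ∃ A ∈ 𝒜, A ⊆ V) (Qbias p)
  rw [Qbias_sum] at hsplit
  have hmono : ∑ V ∈ Finset.univ.filter (fun V : Finset X => ¬ ∃ A ∈ 𝒜, A ⊆ V), Qbias p V
      ≤ ∑ V ∈ Finset.univ.filter (fun V : Finset X => ¬ ∃ H, π H ≠ 0 ∧ H ⊆ V), Qbias p V := by
    apply Finset.sum_le_sum_of_subset_of_nonneg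
    · intro V hV
      rw [Finset.mem_filter] at hV ⊢
      refine ⟨Finset.mem_univ _, ?_⟩
      intro ⟨H, hH0, hHV⟩
      exact hV.2 ⟨H, hπsupp H hH0, hHV⟩
    · intro V _ _
      exact Qbias_nonneg hp0 hp1 V
  linarith
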